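/- arXiv:2605.13019 — 2 statements merged into one kernel-verified Lean document; each statement's English description precedes it below -/
import Mathlib

section
/- Let G₁ = (V₁, E₁) and G₂ = (V₂, E₂) be finite graphs with quantizations S_k := span{|v⟩⟨w| : (v,w) ∈ E_k}. Let f : V₂ → V₁ be a function and θ : ℓ∞(V₁) → ℓ∞(V₂) the induced *-homomorphism g ↦ g ∘ f. Then f is a graph homomorphism (i.e., (v,w) ∈ E₂ implies (f(v), f(w)) ∈ E₁) if and only if (θ ⊗ θ)(Ann(S₁)) ⊆ Ann(S₂). -/
open TensorProduct Matrix

noncomputable def evalT {V : Type*} (v w : V) :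
    (V → ℂ) ⊗[ℂ] (V → ℂ) →ₗ[ℂ] ℂ :=
  TensorProduct.lift ((LinearMap.mul ℂ ℂ).compl₁₂ (LinearMap.proj v) (LinearMap.proj w))

@[simp] lemma evalT_tmul {V : Type*} (v w : V) (x y : V → ℂ) :
    evalT v w (x ⊗ₜ y) = x v * y w := by simp [evalT]

noncomputable def Phi {V : Type*} [Fintype V] [DecidableEq V] :
    (V → ℂ) ⊗[ℂ] (V → ℂ) →ₗ[ℂ] Matrix V V ℂ →ₗ[ℂ] Matrix V V ℂ :=
  TensorProduct.lift
  { toFun := fun x =>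
      { toFun := fun y =>
          (LinearMap.mulLeft ℂ (Matrix.diagonal x)).comp
            (LinearMap.mulRight ℂ (Matrix.diagonal y))
        map_add' := fun y₁ y₂ => by
          ext T
          simp [Matrix.diagonal_add, Matrix.mul_add]
          ring
        map_smul' := fun c y => by
          ext T
          simp [Matrix.diagonal_smul, Matrix.mul_smul] }
    map_add' := fun x₁ x₂ => by
      ext y T
      simp [Matrix.diagonal_add, Matrix.add_mul]
      ring
    map_smul' := fun c x => by
      ext y T
      simp [Matrix.diagonal_smul, smul_mul_assoc] }

lemma Phi_std {V : Type*} [Fintype V] [DecidableEq V] (v w : V)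
    (z : (V → ℂ) ⊗[ℂ] (V → ℂ)) :
    Phi z (Matrix.single v w 1) = evalT v w z • Matrix.single v w 1 := by
  induction z using TensorProduct.induction_on with
  | zero => simp
  | tmul x y =>
      simp only [Phi, TensorProduct.lift.tmul, LinearMap.coe_mk, AddHom.coe_mk,
        LinearMap.coe_comp, Function.comp_apply, LinearMap.mulLeft_apply,
        LinearMap.mulRight_apply, evalT_tmul]
      ext i j
      simp [Matrix.single]
      aesop
  | add a b ha hb => simp [ha, hb, add_smul]

noncomputable def quantization {V : Type*} [Fintype V] [DecidableEq V] (E : Set (V × V)) :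
    Submodule ℂ (Matrix V V ℂ) :=
  Submodule.span ℂ {M : Matrix V V ℂ | ∃ p ∈ E, M = Matrix.single p.1 p.2 1}

def Ann {V : Type*} [Fintype V] [DecidableEq V] (S : Submodule ℂ (Matrix V V ℂ)) :
    Set ((V → ℂ) ⊗[ℂ] (V → ℂ)) :=
  {z | ∀ T ∈ S, Phi z T = 0}

lemma mem_Ann_iff {V : Type*} [Fintype V] [DecidableEq V] (E : Set (V × V))
    (z : (V → ℂ) ⊗[ℂ] (V → ℂ)) :
    z ∈ Ann (quantization E) ↔ ∀ v w : V, (v, w) ∈ E → evalT v w z = 0 := by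
  constructor
  · intro hz v w hvw
    have := hz (Matrix.single v w 1)
      (Submodule.subset_span ⟨(v, w), hvw, rfl⟩)
    rw [Phi_std] at this
    by_contra hne
    have := congrFun (congrFun this v) w
    simp [Matrix.single, hne] at this
  · intro h T hT
    induction hT using Submodule.span_induction with
    | mem M hM =>
        obtain ⟨⟨v, w⟩, hvw, rfl⟩ := hM
        rw [Phi_std, h v w hvw, zero_smul]
    | zero => simp
    | add a b _ _ ha hb => simp [ha, hb]
    | smul c a _ ha => simp [ha]

lemma evalT_map {V₁ V₂ : Type*} (f : V₂ → V₁) (v w : V₂)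
    (z : (V₁ → ℂ) ⊗[ℂ] (V₁ → ℂ)) :
    evalT v w (TensorProduct.map (LinearMap.funLeft ℂ ℂ f) (LinearMap.funLeft ℂ ℂ f) z)
      = evalT (f v) (f w) z := by
  induction z using TensorProduct.induction_on with
  | zero => simp
  | tmul x y => simp [LinearMap.funLeft]
  | add a b ha hb => simp [ha, hb]

/-- `f : V₂ → V₁` is a graph homomorphism iff
`(θ ⊗ θ)(Ann(S₁)) ⊆ Ann(S₂)`, where `θ : ℓ∞(V₁) → ℓ∞(V₂)`, `θ g = g ∘ f`. -/
theorem stmt_1 {V₁ V₂ : Type*} [Fintype V₁] [DecidableEq V₁] [Fintype V₂] [DecidableEq V₂]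
    (E₁ : Set (V₁ × V₁)) (E₂ : Set (V₂ × V₂)) (f : V₂ → V₁) :
    (∀ v w : V₂, (v, w) ∈ E₂ → (f v, f w) ∈ E₁) ↔
      (TensorProduct.map (LinearMap.funLeft ℂ ℂ f) (LinearMap.funLeft ℂ ℂ f)) ''
          Ann (quantization E₁) ⊆ Ann (quantization E₂) := by
  constructor
  · rintro hf _ ⟨z, hz, rfl⟩
    rw [mem_Ann_iff] at hz ⊢
    intro v w hvw
    rw [evalT_map]
    exact hz _ _ (hf v w hvw)
  · intro h v w hvw
    by_contra hne
    set z : (V₁ → ℂ) ⊗[ℂ] (V₁ → ℂ) :=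
      (Pi.single (f v) 1) ⊗ₜ (Pi.single (f w) 1) with hzdef
    have hzAnn : z ∈ Ann (quantization E₁) := by
      rw [mem_Ann_iff]
      intro a b hab
      simp only [hzdef, evalT_tmul, Pi.single_apply]
      have : ¬(a = f v ∧ b = f w) := by
        rintro ⟨rfl, rfl⟩; exact hne hab
      by_cases ha : a = f v
      · have hb : b ≠ f w := fun hb => this ⟨ha, hb⟩
        simp [ha, hb]
      · simp [ha]
    have := h ⟨z, hzAnn, rfl⟩
    rw [mem_Ann_iff] at this
    have := this v w hvw
    rw [evalT_map] at this
    simp [hzdef] at this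
end

section
/- Let A, B ∈ B(H₁) be positive operators, T ∈ B(H₂), and K_i, K_j ∈ B(H₂, H₁) bounded operators between Hilbert spaces. Then (K_i† A K_i) T (K_j† B K_j) = 0 if and only if (A K_i) T (K_j† B) = 0. -/
open ContinuousLinearMap

set_option maxHeartbeats 1000000
set_option synthInstance.maxHeartbeats 400000

private lemma aux_adjoint_comp_self_eq_zero {H₁ H₂ : Type*}
    [NormedAddCommGroup H₁] [InnerProductSpace ℂ H₁] [CompleteSpace H₁]
    [NormedAddCommGroup H₂] [InnerProductSpace ℂ H₂] [CompleteSpace H₂]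
    (f : H₂ →L[ℂ] H₁) (h : (adjoint f).comp f = 0) : f = 0 := by
  have hn := f.norm_adjoint_comp_self
  rw [h, norm_zero] at hn
  have : ‖f‖ = 0 := by nlinarith [norm_nonneg f]
  simpa [norm_eq_zero] using this

/-- for positive `A, B ∈ B(H₁)`, `T ∈ B(H₂)` and `K_i, K_j ∈ B(H₂, H₁)`,
`(K_i† A K_i) T (K_j† B K_j) = 0` iff `(A K_i) T (K_j† B) = 0`. -/
theorem stmt_4 {H₁ H₂ : Type*}
    [NormedAddCommGroup H₁] [InnerProductSpace ℂ H₁] [CompleteSpace H₁]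
    [NormedAddCommGroup H₂] [InnerProductSpace ℂ H₂] [CompleteSpace H₂]
    (A B : H₁ →L[ℂ] H₁) (hA : A.IsPositive) (hB : B.IsPositive)
    (T : H₂ →L[ℂ] H₂) (Ki Kj : H₂ →L[ℂ] H₁) :
    ((adjoint Ki).comp (A.comp Ki)).comp (T.comp ((adjoint Kj).comp (B.comp Kj))) = 0 ↔
      (A.comp Ki).comp (T.comp ((adjoint Kj).comp B)) = 0 := by
  constructor
  · intro h
    have hA0 : (0 : H₁ →L[ℂ] H₁) ≤ A := (nonneg_iff_isPositive A).mpr hA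
    have hB0 : (0 : H₁ →L[ℂ] H₁) ≤ B := (nonneg_iff_isPositive B).mpr hB
    set S := CFC.sqrt A with hSdef
    set R := CFC.sqrt B with hRdef
    have hS2 : S * S = A := CFC.sqrt_mul_sqrt_self A hA0
    have hR2 : R * R = B := CFC.sqrt_mul_sqrt_self B hB0
    have hSadj : adjoint S = S :=
      isSelfAdjoint_iff'.mp ((nonneg_iff_isPositive S).mp (CFC.sqrt_nonneg A)).isSelfAdjoint
    have hRadj : adjoint R = R :=
      isSelfAdjoint_iff'.mp ((nonneg_iff_isPositive R).mp (CFC.sqrt_nonneg B)).isSelfAdjoint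
    have hSS : ∀ y, S (S y) = A y := fun y => by rw [← hS2, ContinuousLinearMap.mul_apply]
    have hRR : ∀ y, R (R y) = B y := fun y => by rw [← hR2, ContinuousLinearMap.mul_apply]
    set P : H₁ →L[ℂ] H₁ := Ki.comp (T.comp (adjoint Kj)) with hPdef
    have hPadj : ∀ z, adjoint P z = Kj (adjoint T (adjoint Ki z)) := by
      intro z
      simp [hPdef, adjoint_comp, adjoint_adjoint, comp_apply]
    have hP : ∀ z, P z = Ki (T (adjoint Kj z)) := fun z => by simp [hPdef, comp_apply]
    -- pointwise form of the hypothesis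
    have h' : ∀ x, adjoint Ki (S (S (P (R (R (Kj x)))))) = 0 := by
      intro x
      have := DFunLike.congr_fun h x
      simp only [comp_apply, zero_apply] at this
      rw [hP, hSS, hRR]
      exact this
    -- Step 1 : S P R R Kj = 0
    have hW : (S.comp (P.comp (R.comp R))).comp Kj = 0 := by
      apply aux_adjoint_comp_self_eq_zero
      ext x
      simp only [comp_apply, adjoint_comp, adjoint_adjoint, hSadj, hRadj, zero_apply]
      rw [hPadj, h']
      simp
    -- Step 2 : S P R = 0
    have hV : S.comp (P.comp R) = 0 := by
      have h0 : (S.comp (P.comp R)).comp (adjoint (S.comp (P.comp R))) = 0 := by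
        ext x
        simp only [comp_apply, adjoint_comp, adjoint_adjoint, hSadj, hRadj, zero_apply]
        rw [hPadj]
        have := DFunLike.congr_fun hW (adjoint T (adjoint Ki (S x)))
        simp only [comp_apply, zero_apply] at this
        rw [this]
      have h1 : adjoint (S.comp (P.comp R)) = 0 := by
        apply aux_adjoint_comp_self_eq_zero
        rw [adjoint_adjoint]
        exact h0
      have := congrArg adjoint h1
      rwa [adjoint_adjoint, map_zero] at this
    -- conclude
    ext x
    simp only [comp_apply, zero_apply]
    have := DFunLike.congr_fun hV (R x)
    simp only [comp_apply, zero_apply] at this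
    rw [show Ki (T ((adjoint Kj) (B x))) = P (R (R x)) from by rw [hP, hRR], ← hSS, this,
      map_zero]
  · intro h
    ext x
    simp only [comp_apply, zero_apply]
    have := DFunLike.congr_fun h (Kj x)
    simp only [comp_apply, zero_apply] at this
    rw [this, map_zero]
end
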